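/- Suppose at termination of the subadditive algorithm the n agents are partitioned into ℓ chains and the remaining agents in cycles, such that: for each chain's head agent i we have v_i(M_i) ≥ (1/α)·v_i(X_i); for each cycle agent and non-head chain agent i we have v_i(M_i) ≥ (1/(α+1))·v_i(X_i). Then ∏_i v_i(M_i) ≥ (1/(α+1))^n · ((α+1)/α)^ℓ · ∏_i v_i(X_i); in particular, if moreover ((α+1)/α)^ℓ · ∏_i v_i(X_i) ≥ ∏_i v_i(X_i^0) for the initial bundles X^0, then NW(M) ≥ (1/(α+1))·NW(X^0). -/
import Mathlib


open Finset

/-- Final aggregation for the subadditive Nash welfare bound: if the `ℓ` chain-head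
agents `i ∈ H` satisfy `v_i(M_i) ≥ (1/α)·v_i(X_i)` and all other agents satisfy
`v_i(M_i) ≥ (1/(α+1))·v_i(X_i)`, then
`∏ᵢ v_i(M_i) ≥ (1/(α+1))^n · ((α+1)/α)^ℓ · ∏ᵢ v_i(X_i)`; and if moreover
`((α+1)/α)^ℓ · ∏ᵢ v_i(X_i) ≥ ∏ᵢ v_i(X⁰_i)`, then `NW(M) ≥ (1/(α+1))·NW(X⁰)`. -/
theorem stmt_16 (n m : ℕ) (hn : 0 < n) (α : ℝ) (hα0 : 0 < α) (hα1 : α ≤ 1 / 2)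
    (v : Fin n → Finset (Fin m) → ℝ)
    (M X X0 : Fin n → Finset (Fin m))
    (hposM : ∀ i, 0 < v i (M i)) (hposX : ∀ i, 0 < v i (X i))
    (hposX0 : ∀ i, 0 < v i (X0 i))
    (H : Finset (Fin n)) (ℓ : ℕ) (hcard : H.card = ℓ)
    (hhead : ∀ i ∈ H, v i (M i) ≥ (1 / α) * v i (X i))
    (hrest : ∀ i ∉ H, v i (M i) ≥ (1 / (α + 1)) * v i (X i)) :
    (∏ i, v i (M i)) ≥ (1 / (α + 1)) ^ n * ((α + 1) / α) ^ ℓ * ∏ i, v i (X i) ∧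
    (((α + 1) / α) ^ ℓ * (∏ i, v i (X i)) ≥ (∏ i, v i (X0 i)) →
      (∏ i, v i (M i)) ^ ((1 : ℝ) / (n : ℝ)) ≥
        (1 / (α + 1)) * (∏ i, v i (X0 i)) ^ ((1 : ℝ) / (n : ℝ))) := by
  have hα1' : (0:ℝ) < α + 1 := by linarith
  have hkey : ∀ i, (1 / (α + 1)) * (if i ∈ H then (α + 1) / α else 1) * v i (X i)
      ≤ v i (M i) := by
    intro i
    by_cases h : i ∈ H
    · simp only [h, if_true]
      have : (1 / (α + 1)) * ((α + 1) / α) = 1 / α := by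
        field_simp
      rw [this]
      exact hhead i h
    · simp only [h, if_false, mul_one]
      exact hrest i h
  have hnonneg : ∀ i ∈ (univ : Finset (Fin n)),
      0 ≤ (1 / (α + 1)) * (if i ∈ H then (α + 1) / α else 1) * v i (X i) := by
    intro i _
    have h1 : (0:ℝ) ≤ (if i ∈ H then (α + 1) / α else 1) := by
      split <;> positivity
    exact mul_nonneg (mul_nonneg (by positivity) h1) (hposX i).le
  have hprod : (∏ i, (1 / (α + 1)) * (if i ∈ H then (α + 1) / α else 1) * v i (X i))
      ≤ ∏ i, v i (M i) :=
    Finset.prod_le_prod hnonneg (fun i _ => hkey i)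
  have hsplit : (∏ i, (1 / (α + 1)) * (if i ∈ H then (α + 1) / α else 1) * v i (X i))
      = (1 / (α + 1)) ^ n * ((α + 1) / α) ^ ℓ * ∏ i, v i (X i) := by
    rw [Finset.prod_mul_distrib, Finset.prod_mul_distrib, Finset.prod_const,
      Finset.card_univ, Fintype.card_fin]
    congr 1
    congr 1
    rw [Finset.prod_ite_mem, Finset.univ_inter, Finset.prod_const, hcard]
  have hmain : (∏ i, v i (M i)) ≥ (1 / (α + 1)) ^ n * ((α + 1) / α) ^ ℓ * ∏ i, v i (X i) := by
    rw [← hsplit]; exact hprod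
  refine ⟨hmain, fun hX0 => ?_⟩
  have h2 : (∏ i, v i (M i)) ≥ (1 / (α + 1)) ^ n * ∏ i, v i (X0 i) := by
    calc (∏ i, v i (M i)) ≥ (1 / (α + 1)) ^ n * (((α + 1) / α) ^ ℓ * ∏ i, v i (X i)) := by
          rw [← mul_assoc]; exact hmain
      _ ≥ (1 / (α + 1)) ^ n * ∏ i, v i (X0 i) := by
          apply mul_le_mul_of_nonneg_left hX0
          positivity
  have hne : (n:ℝ) ≠ 0 := Nat.cast_ne_zero.mpr hn.ne'
  have hx0pos : (0:ℝ) < ∏ i, v i (X0 i) := Finset.prod_pos (fun i _ => hposX0 i)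
  have hrw : ((1 / (α + 1)) ^ n * ∏ i, v i (X0 i)) ^ ((1:ℝ)/(n:ℝ))
      = (1 / (α + 1)) * (∏ i, v i (X0 i)) ^ ((1:ℝ)/(n:ℝ)) := by
    rw [Real.mul_rpow (by positivity) hx0pos.le]
    congr 1
    rw [← Real.rpow_natCast (1 / (α + 1)) n, ← Real.rpow_mul (by positivity)]
    rw [mul_one_div, div_self hne, Real.rpow_one]
  rw [ge_iff_le, ← hrw]
  exact Real.rpow_le_rpow (by positivity) h2 (by positivity)
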